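/- Let f, g : [0,1] → [0, ∞) with f concave nonincreasing, g affine nonincreasing, f(0) = g(0) = 1, and suppose ∫₀¹ f(x)^{m} dx = ∫₀¹ g(x)^{m} dx for some integer m ≥ 1. Then ∫₀¹ x·f(x)^{m} dx ≤ ∫₀¹ x·g(x)^{m} dx. -/

import Mathlib

open MeasureTheory intervalIntegral

theorem compare_with_affine (f : ℝ → ℝ)
    (hconc : ConcaveOn ℝ (Set.Icc (0:ℝ) 1) f)
    (hmono : AntitoneOn f (Set.Icc (0:ℝ) 1))
    (hnonneg : ∀ x ∈ Set.Icc (0:ℝ) 1, 0 ≤ f x)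
    (hf0 : f 0 = 1)
    (α : ℝ) (hα0 : 0 ≤ α) (hα1 : α ≤ 1)
    (m : ℕ) (hm : 1 ≤ m)
    (heq : ∫ x in (0:ℝ)..1, f x ^ m = ∫ x in (0:ℝ)..1, (1 - α * x) ^ m) :
    ∫ x in (0:ℝ)..1, x * f x ^ m ≤ ∫ x in (0:ℝ)..1, x * (1 - α * x) ^ m := by
  set g : ℝ → ℝ := fun x => 1 - α * x with hg
  have hgnn : ∀ x ∈ Set.Icc (0:ℝ) 1, 0 ≤ g x := by
    intro x hx
    have : α * x ≤ 1 * 1 := mul_le_mul hα1 hx.2 hx.1 zero_le_one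
    simp only [hg]; linarith
  -- integrability
  have huIcc : Set.uIcc (0:ℝ) 1 = Set.Icc 0 1 := Set.uIcc_of_le zero_le_one
  have hfmAnti : AntitoneOn (fun x => f x ^ m) (Set.Icc (0:ℝ) 1) := by
    intro a ha b hb hab
    exact pow_le_pow_left₀ (hnonneg b hb) (hmono ha hb hab) m
  have hIf : IntervalIntegrable (fun x => f x ^ m) volume 0 1 := by
    apply AntitoneOn.intervalIntegrable
    rwa [huIcc]
  have hgc : Continuous (fun x => g x ^ m) := by
    simp only [hg]; continuity
  have hIg : IntervalIntegrable (fun x => g x ^ m) volume 0 1 :=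
    hgc.intervalIntegrable 0 1
  have hIphi : IntervalIntegrable (fun x => f x ^ m - g x ^ m) volume 0 1 := hIf.sub hIg
  have hIxf : IntervalIntegrable (fun x => x * f x ^ m) volume 0 1 :=
    hIf.continuousOn_mul (continuous_id.continuousOn)
  have hIxg : IntervalIntegrable (fun x => x * g x ^ m) volume 0 1 :=
    hIg.continuousOn_mul (continuous_id.continuousOn)
  have hIxphi : IntervalIntegrable (fun x => x * (f x ^ m - g x ^ m)) volume 0 1 :=
    hIphi.continuousOn_mul (continuous_id.continuousOn)
  -- crossing point
  set S : Set ℝ := {x | x ∈ Set.Icc (0:ℝ) 1 ∧ g x ≤ f x} with hS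
  have h0S : (0:ℝ) ∈ S := by
    constructor
    · exact Set.mem_Icc.mpr ⟨le_rfl, zero_le_one⟩
    · simp [hg, hf0]
  have hSne : S.Nonempty := ⟨0, h0S⟩
  have hSbdd : BddAbove S := ⟨1, fun x hx => hx.1.2⟩
  set c := sSup S with hc
  have hc0 : 0 ≤ c := le_csSup hSbdd h0S
  have hc1 : c ≤ 1 := csSup_le hSne (fun x hx => hx.1.2)
  -- claim A: g ≤ f on [0, c)
  have claimA : ∀ x ∈ Set.Icc (0:ℝ) 1, x < c → g x ≤ f x := by
    intro x hx hxc
    obtain ⟨y, hyS, hxy⟩ := exists_lt_of_lt_csSup hSne hxc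
    have hy0 : 0 < y := lt_of_le_of_lt hx.1 hxy
    have hyIcc : y ∈ Set.Icc (0:ℝ) 1 := hyS.1
    have h0Icc : (0:ℝ) ∈ Set.Icc (0:ℝ) 1 := Set.mem_Icc.mpr ⟨le_rfl, zero_le_one⟩
    set a := (y - x) / y with ha
    set b := x / y with hb
    have hax : 0 ≤ a := div_nonneg (by linarith) hy0.le
    have hbx : 0 ≤ b := div_nonneg hx.1 hy0.le
    have hab : a + b = 1 := by
      rw [ha, hb, ← add_div, sub_add_cancel, div_self hy0.ne']
    have hby : b * y = x := by rw [hb]; exact div_mul_cancel₀ x hy0.ne'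
    have hcomb := hconc.2 h0Icc hyIcc hax hbx hab
    simp only [smul_eq_mul, mul_zero, zero_add, hf0] at hcomb
    rw [hby] at hcomb
    have hfy : g y ≤ f y := hyS.2
    have : a * 1 + b * g y ≤ a * 1 + b * f y := by nlinarith
    have hgx : a * 1 + b * g y = g x := by
      simp only [hg]
      have : b * y = x := hby
      nlinarith
    linarith [hcomb, this, hgx.symm.le]
  -- claim B: f ≤ g on (c, 1]
  have claimB : ∀ x ∈ Set.Icc (0:ℝ) 1, c < x → f x ≤ g x := by
    intro x hx hcx
    by_contra h
    push_neg at h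
    have : x ∈ S := ⟨hx, h.le⟩
    exact absurd (le_csSup hSbdd this) (not_le.mpr hcx)
  -- pointwise sign
  have hpt : ∀ x ∈ Set.Icc (0:ℝ) 1, (x - c) * (f x ^ m - g x ^ m) ≤ 0 := by
    intro x hx
    rcases lt_trichotomy x c with h | h | h
    · have h1 : g x ^ m ≤ f x ^ m :=
        pow_le_pow_left₀ (hgnn x hx) (claimA x hx h) m
      exact mul_nonpos_of_nonpos_of_nonneg (by linarith) (by linarith)
    · simp [h]
    · have h1 : f x ^ m ≤ g x ^ m :=
        pow_le_pow_left₀ (hnonneg x hx) (claimB x hx h) m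
      exact mul_nonpos_of_nonneg_of_nonpos (by linarith) (by linarith)
  -- integral of (x - c) * φ ≤ 0
  have hInt : (∫ x in (0:ℝ)..1, (x - c) * (f x ^ m - g x ^ m)) ≤ 0 := by
    have hnn : 0 ≤ ∫ x in (0:ℝ)..1, -((x - c) * (f x ^ m - g x ^ m)) :=
      intervalIntegral.integral_nonneg zero_le_one (fun u hu => by linarith [hpt u hu])
    rw [intervalIntegral.integral_neg] at hnn
    linarith
  -- split the integral
  have hsplit : (∫ x in (0:ℝ)..1, (x - c) * (f x ^ m - g x ^ m))
      = (∫ x in (0:ℝ)..1, x * (f x ^ m - g x ^ m))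
        - c * (∫ x in (0:ℝ)..1, (f x ^ m - g x ^ m)) := by
    rw [← intervalIntegral.integral_const_mul, ← intervalIntegral.integral_sub hIxphi
      (hIphi.const_mul c)]
    congr 1
    ext x
    ring
  have hphi0 : (∫ x in (0:ℝ)..1, (f x ^ m - g x ^ m)) = 0 := by
    rw [intervalIntegral.integral_sub hIf hIg, heq]
    simp [hg]
  have hxphi : (∫ x in (0:ℝ)..1, x * (f x ^ m - g x ^ m))
      = (∫ x in (0:ℝ)..1, x * f x ^ m) - (∫ x in (0:ℝ)..1, x * g x ^ m) := by
    rw [← intervalIntegral.integral_sub hIxf hIxg]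
    congr 1
    ext x
    ring
  have := hInt
  rw [hsplit, hphi0, hxphi] at this
  simp only [hg] at this ⊢
  linarith
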